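/- Let G be the presented group on generators a, b with relators a³, b², and (ab)³ (so G is isomorphic to the alternating group A₄ of order 12), and let A = {a, a⁻¹, b}, a finite symmetric generating set of G (b is an involution). Then the three-letter word b·a·b⁻¹ is geodesic over A, and consequently the geodesic language Geo(G, A) is not piecewise excluding. -/

import Mathlib

/-- `w` is a word over the alphabet `A`: every letter of `w` lies in `A`. -/
def IsWordOver {G : Type*} (A : Finset G) (w : List G) : Prop :=
  ∀ x ∈ w, x ∈ A

/-- `A` is a finite symmetric (inverse-closed) generating set of the group `G`. -/
def IsSymmGen {G : Type*} [Group G] (A : Finset G) : Prop :=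
  Subgroup.closure (A : Set G) = ⊤ ∧ ∀ a ∈ A, a⁻¹ ∈ A

/-- `w` is a geodesic word over `A`: no word over `A` of strictly smaller length
evaluates to the same element of `G`. -/
def IsGeodesic {G : Type*} [Group G] (A : Finset G) (w : List G) : Prop :=
  IsWordOver A w ∧
    ∀ v : List G, IsWordOver A v → v.prod = w.prod → w.length ≤ v.length

/-- The geodesic language of `G` over `A`. -/
def Geo {G : Type*} [Group G] (A : Finset G) : Set (List G) :=
  {w | IsGeodesic A w}

/-- A language `L` of words over `A` is piecewise excluding if there is a finite set `F`
of words over `A` such that a word `w` over `A` lies in `L` iff no element of `F` is a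
piecewise subword (i.e. a not-necessarily-contiguous subsequence) of `w`. -/
def PiecewiseExcluding {G : Type*} (A : Finset G) (L : Set (List G)) : Prop :=
  ∃ F : Finset (List G), (∀ u ∈ F, IsWordOver A u) ∧
    ∀ w : List G, IsWordOver A w → (w ∈ L ↔ ∀ u ∈ F, ¬ List.Sublist u w)

/-- The relators of `⟨a, b ∣ a³, b², (ab)³⟩ ≅ A₄`, with `a` the image of `0` and `b`
the image of `1`. -/
def a4Rels : Set (FreeGroup (Fin 2)) :=
  {(FreeGroup.of 0) ^ 3, (FreeGroup.of 1) ^ 2,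
   (FreeGroup.of 0 * FreeGroup.of 1) ^ 3}

/-- The group `⟨a, b ∣ a³, b², (ab)³⟩ ≅ A₄` of order 12. -/
abbrev A4Pres : Type := PresentedGroup a4Rels

noncomputable instance : DecidableEq A4Pres := Classical.decEq _

/-- The generating set `A = {a, a⁻¹, b}` (`b` is an involution). -/
noncomputable def a4GenSet : Finset A4Pres :=
  {PresentedGroup.of 0, (PresentedGroup.of 0)⁻¹, PresentedGroup.of 1}

/-! ### Auxiliary material: a concrete model of `A₄` inside `Perm (Fin 4)` -/

/-- The 3-cycle `(0 1 2)`. -/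
def A4Aux.cperm : Equiv.Perm (Fin 4) := Equiv.swap 0 1 * Equiv.swap 1 2
/-- The double transposition `(0 1)(2 3)`. -/
def A4Aux.dperm : Equiv.Perm (Fin 4) := Equiv.swap 0 1 * Equiv.swap 2 3

def A4Aux.fmap : Fin 2 → Equiv.Perm (Fin 4) := ![A4Aux.cperm, A4Aux.dperm]

lemma A4Aux.hrels : ∀ r ∈ a4Rels, FreeGroup.lift A4Aux.fmap r = 1 := by
  intro r hr
  rcases hr with h | h | h <;> subst h <;>
    simp [map_pow, map_mul, FreeGroup.lift_apply_of, A4Aux.fmap] <;> decide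

/-- The canonical homomorphism to the concrete model. -/
noncomputable def A4Aux.phi : A4Pres →* Equiv.Perm (Fin 4) :=
  PresentedGroup.toGroup A4Aux.hrels

lemma A4Aux.phi_a : A4Aux.phi (PresentedGroup.of 0) = A4Aux.cperm :=
  PresentedGroup.toGroup.of A4Aux.hrels
lemma A4Aux.phi_b : A4Aux.phi (PresentedGroup.of 1) = A4Aux.dperm :=
  PresentedGroup.toGroup.of A4Aux.hrels

lemma A4Aux.rel_one {r : FreeGroup (Fin 2)} (h : r ∈ a4Rels) :
    (QuotientGroup.mk r : A4Pres) = 1 := by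
  rw [QuotientGroup.eq_one_iff]
  exact Subgroup.subset_normalClosure h

lemma A4Aux.b_sq : (PresentedGroup.of 1 : A4Pres) * PresentedGroup.of 1 = 1 := by
  have := A4Aux.rel_one (show (FreeGroup.of 1) ^ 2 ∈ a4Rels by right; left; rfl)
  exact this

lemma A4Aux.b_inv : (PresentedGroup.of 1 : A4Pres)⁻¹ = PresentedGroup.of 1 :=
  inv_eq_of_mul_eq_one_right A4Aux.b_sq

open A4Aux in
lemma A4Aux.mem_gen {x : A4Pres} (hx : x ∈ a4GenSet) :
    x = PresentedGroup.of 0 ∨ x = (PresentedGroup.of 0)⁻¹ ∨ x = PresentedGroup.of 1 := by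
  simpa [a4GenSet] using hx

open A4Aux in
lemma A4Aux.geo_bab :
    IsGeodesic a4GenSet
      [(PresentedGroup.of 1 : A4Pres), PresentedGroup.of 0, (PresentedGroup.of 1)⁻¹] := by
  constructor
  · intro x hx
    simp only [List.mem_cons, List.not_mem_nil, or_false] at hx
    rcases hx with rfl | rfl | rfl <;> simp [a4GenSet, b_inv]
  · intro v hv hprod
    have key := congrArg phi hprod
    simp only [List.prod_cons, List.prod_nil, map_mul, map_inv, map_one, mul_one,
      phi_a, phi_b] at key
    rcases v with _ | ⟨x, _ | ⟨y, _ | ⟨z, t⟩⟩⟩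
    · exfalso
      simp only [List.prod_nil, map_one] at key
      exact absurd key (by decide)
    · exfalso
      rcases mem_gen (hv x (by simp)) with rfl | rfl | rfl <;>
        simp only [List.prod_cons, List.prod_nil, mul_one, map_inv, phi_a, phi_b] at key <;>
        exact absurd key (by decide)
    · exfalso
      rcases mem_gen (hv x (by simp)) with rfl | rfl | rfl <;>
        rcases mem_gen (hv y (by simp)) with rfl | rfl | rfl <;>
        simp only [List.prod_cons, List.prod_nil, mul_one, map_mul, map_inv,
          phi_a, phi_b] at key <;>
        exact absurd key (by decide)
    · simp only [List.length_cons, List.length_nil]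
      omega

/-- In `⟨a, b ∣ a³, b², (ab)³⟩ ≅ A₄` with `A = {a, a⁻¹, b}`, the word `b·a·b⁻¹` is
geodesic, so the geodesic language is not piecewise excluding. -/
theorem a4_not_piecewise_excluding :
    IsSymmGen a4GenSet ∧
    IsGeodesic a4GenSet
      [(PresentedGroup.of 1 : A4Pres), PresentedGroup.of 0, (PresentedGroup.of 1)⁻¹] ∧
    ¬ PiecewiseExcluding a4GenSet (Geo a4GenSet) := by
  open A4Aux in
  refine ⟨⟨?_, ?_⟩, geo_bab, ?_⟩
  · rw [eq_top_iff, ← PresentedGroup.closure_range_of a4Rels]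
    apply Subgroup.closure_mono
    rintro _ ⟨i, rfl⟩
    fin_cases i <;> simp [a4GenSet]
  · intro x hx
    rcases mem_gen hx with rfl | rfl | rfl <;> simp [a4GenSet, b_inv]
  · rintro ⟨F, -, hiff⟩
    have hbb_word : IsWordOver a4GenSet [(PresentedGroup.of 1 : A4Pres), PresentedGroup.of 1] := by
      intro x hx
      simp only [List.mem_cons, List.not_mem_nil, or_false] at hx
      rcases hx with rfl | rfl <;> simp [a4GenSet]
    have h1 := (hiff _ geo_bab.1).mp geo_bab
    have hsub : List.Sublist [(PresentedGroup.of 1 : A4Pres), PresentedGroup.of 1]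
        [(PresentedGroup.of 1 : A4Pres), PresentedGroup.of 0, (PresentedGroup.of 1)⁻¹] := by
      rw [b_inv]
      exact ((List.Sublist.refl _).cons _).cons₂ _
    have hbb : [(PresentedGroup.of 1 : A4Pres), PresentedGroup.of 1] ∈ Geo a4GenSet :=
      (hiff _ hbb_word).mpr fun u hu hsu => h1 u hu (hsu.trans hsub)
    have := hbb.2 [] (by intro x hx; simp at hx) (by simp [b_sq])
    simp at this
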